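/- Let Y be a regular Hausdorff space and f : X → Y globally multi-split continuous. Then the star multifunction f* : X ⇉ Y, which sends each p ∈ X to the set of extended values of f at p, is upper semicontinuous at every point of X. -/

import Mathlib

open Filter Topology Set

universe u v w

variable {X : Type u} {Y : Type v} [TopologicalSpace X] [TopologicalSpace Y]

/-- `Z` is a set of extended values of `f` at `p`. -/
def ExtendedValues (f : X → Y) (p : X) (Z : Set Y) : Prop :=
  Z.Finite ∧ Z.Nonempty ∧
    (∀ y ∈ Z, ∀ U ∈ 𝓝 p, ∀ V ∈ 𝓝 y, (f '' U ∩ V).Nonempty) ∧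
    (∀ V ∈ 𝓝ˢ Z, ∃ U ∈ 𝓝 p, f '' U ⊆ V)

/-- `f` is multi-split continuous at `p`. -/
def MultiSplitAt (f : X → Y) (p : X) : Prop := ∃ Z : Set Y, ExtendedValues f p Z

theorem stmt10 [T3Space Y] (f : X → Y) (hf : ∀ p : X, MultiSplitAt f p)
    (fstar : X → Set Y) (hstar : ∀ p : X, ExtendedValues f p (fstar p)) :
    ∀ p : X, ∀ V ∈ 𝓝ˢ (fstar p), {x : X | fstar x ⊆ V} ∈ 𝓝 p := by
  intro p V hV
  -- get an open W with fstar p ⊆ W and closure W ⊆ V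
  obtain ⟨W, hWo, hZW, hWV⟩ :=
    ((hstar p).1.isCompact).exists_isOpen_closure_subset hV
  -- from property (b), find U ∈ 𝓝 p with f '' U ⊆ W
  obtain ⟨U, hU, hfU⟩ := (hstar p).2.2.2 W (hWo.mem_nhdsSet.2 hZW)
  refine mem_of_superset (interior_mem_nhds.2 hU) ?_
  intro x hx
  intro y hy
  -- every neighborhood of y meets f '' (interior U) ⊆ W, so y ∈ closure W
  apply hWV
  rw [mem_closure_iff_nhds]
  intro t ht
  obtain ⟨z, hz⟩ := (hstar x).2.2.1 y hy (interior U) (isOpen_interior.mem_nhds hx) t ht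
  exact ⟨z, hz.2, hfU (image_mono (f := f) interior_subset hz.1)⟩
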